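/- Let B : ℝ³ → ℝ³ be a magnetic field of medium decay with |B(x)| ≤ C|x|^{−μ} for all sufficiently large |x|, where 3/2 < μ ≤ 2. Then the Coulomb gauge vector potential A(x) := −(1/(4π)) ∫_{ℝ³} ((x−y)/|x−y|³) × B(y) dy satisfies |A(x)| ≤ C′|x|^{−(μ−1)} for all sufficiently large |x|. -/

import Mathlib

open MeasureTheory Filter Topology
open scoped ENNReal

noncomputable section

abbrev E3 := EuclideanSpace ℝ (Fin 3)

/-- Euclidean dot product on `ℝ³`. -/
def dot3 (a b : E3) : ℝ := @inner ℝ _ _ a b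

/-- Cross product on `ℝ³`. -/
def cross3 (a b : E3) : E3 :=
  WithLp.toLp 2 ![a 1 * b 2 - a 2 * b 1, a 2 * b 0 - a 0 * b 2, a 0 * b 1 - a 1 * b 0]

/-- `∂ᵢ fₖ (x)` for a map `f : ℝ³ → ℝ³`. -/
def pderiv3 (f : E3 → E3) (i k : Fin 3) (x : E3) : ℝ :=
  fderiv ℝ f x (EuclideanSpace.single i 1) k

/-- Pointwise (classical) curl of a map `ℝ³ → ℝ³`. -/
def curl3 (f : E3 → E3) (x : E3) : E3 :=
  WithLp.toLp 2 ![pderiv3 f 1 2 x - pderiv3 f 2 1 x,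
    pderiv3 f 2 0 x - pderiv3 f 0 2 x,
    pderiv3 f 0 1 x - pderiv3 f 1 0 x]

/-- The longitudinal component of `A` decays integrably:
`∫₀^∞ sup { |A(x)·x|/|x| : |x| ≥ r } dr < ∞`. -/
def LongitudinalIntegrableDecay (A : E3 → E3) : Prop :=
  (∫⁻ r in Set.Ioi (0:ℝ),
    ⨆ x ∈ {x : E3 | r ≤ ‖x‖}, ENNReal.ofReal (|dot3 (A x) x| / ‖x‖)) < ⊤

/-- A vector potential of medium range. -/
def IsMediumRange (A : E3 → E3) : Prop :=
  Continuous A ∧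
  (∃ C > (0:ℝ), ∃ μ : ℝ, 1/2 < μ ∧ ∃ R : ℝ, ∀ x : E3, R ≤ ‖x‖ → ‖A x‖ ≤ C * ‖x‖ ^ (-μ)) ∧
  LongitudinalIntegrableDecay A

/-- `div B = 0` in the sense of tempered distributions. -/
def DivFreeS' (B : E3 → E3) : Prop :=
  ∀ φ : SchwartzMap E3 ℝ, ∫ x, fderiv ℝ (⇑φ) x (B x) = 0

/-- A magnetic field of medium decay on `ℝ³`. -/
def IsMediumDecay (B : E3 → E3) : Prop :=
  (∃ p : ℝ, 3 < p ∧ MemLp B (ENNReal.ofReal p) volume) ∧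
  (∃ C > (0:ℝ), ∃ μ : ℝ, 3/2 < μ ∧ ∃ R : ℝ, ∀ x : E3, R ≤ ‖x‖ → ‖B x‖ ≤ C * ‖x‖ ^ (-μ)) ∧
  DivFreeS' B

/-- `curl A = B` in the sense of tempered distributions. -/
def CurlEqS' (A B : E3 → E3) : Prop :=
  ∀ φ : SchwartzMap E3 E3, (∫ x, dot3 (A x) (curl3 (⇑φ) x)) = ∫ x, dot3 (B x) (φ x)

/-- The Coulomb gauge vector potential. -/
def coulombGauge (B : E3 → E3) : E3 → E3 :=
  fun x => (-(4 * Real.pi)⁻¹) • ∫ y : E3, cross3 ((‖x - y‖ ^ 3)⁻¹ • (x - y)) (B y)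



section Statement9Helpers

open Metric

set_option maxRecDepth 4000

lemma st9_coord_le (a : E3) (i : Fin 3) : |a i| ≤ ‖a‖ := by
  rw [EuclideanSpace.norm_eq, ← Real.sqrt_sq_eq_abs]
  apply Real.sqrt_le_sqrt
  have : ‖a i‖ ^ 2 ≤ ∑ j, ‖a j‖ ^ 2 :=
    Finset.single_le_sum (f := fun j => ‖a j‖ ^ 2) (fun j _ => sq_nonneg _) (Finset.mem_univ i)
  simpa [Real.norm_eq_abs, sq_abs] using this

lemma st9_cross_le (a b : E3) : ‖cross3 a b‖ ≤ 4 * (‖a‖ * ‖b‖) := by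
  have hab : (0:ℝ) ≤ ‖a‖ * ‖b‖ := by positivity
  have key : ∀ i j k l : Fin 3, |a i * b j - a k * b l| ≤ 2 * (‖a‖ * ‖b‖) := by
    intro i j k l
    calc |a i * b j - a k * b l| ≤ |a i * b j| + |a k * b l| := abs_sub _ _
    _ ≤ ‖a‖ * ‖b‖ + ‖a‖ * ‖b‖ := by
        rw [abs_mul, abs_mul]
        gcongr <;> first
          | exact st9_coord_le a _ |>.trans le_rfl
          | exact st9_coord_le b _ |>.trans le_rfl
        all_goals positivity
    _ = 2 * (‖a‖ * ‖b‖) := by ring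
  have hsq : ∀ i j k l : Fin 3, (a i * b j - a k * b l) ^ 2 ≤ (2 * (‖a‖ * ‖b‖)) ^ 2 := by
    intro i j k l
    have h := abs_le.mp (key i j k l)
    exact sq_le_sq' (by linarith [h.1]) h.2
  rw [EuclideanSpace.norm_eq]
  have h4 : Real.sqrt ((4 * (‖a‖ * ‖b‖)) ^ 2) = 4 * (‖a‖ * ‖b‖) := Real.sqrt_sq (by positivity)
  rw [← h4]
  apply Real.sqrt_le_sqrt
  simp only [Fin.sum_univ_three, Real.norm_eq_abs, sq_abs]
  have e0 : cross3 a b 0 = a 1 * b 2 - a 2 * b 1 := rfl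
  have e1 : cross3 a b 1 = a 2 * b 0 - a 0 * b 2 := rfl
  have e2 : cross3 a b 2 = a 0 * b 1 - a 1 * b 0 := rfl
  rw [e0, e1, e2]
  nlinarith [hsq 1 2 2 1, hsq 2 0 0 2, hsq 0 1 1 0, sq_nonneg (‖a‖ * ‖b‖)]

lemma st9_kernel_le (v : E3) : ‖(‖v‖ ^ 3)⁻¹ • v‖ ≤ ‖v‖ ^ (-(2:ℝ)) := by
  rcases eq_or_ne v 0 with h | h
  · simp [h, Real.zero_rpow (by norm_num : (-(2:ℝ)) ≠ 0)]
  · have hv : (0:ℝ) < ‖v‖ := norm_pos_iff.mpr h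
    rw [norm_smul, Real.norm_eq_abs, abs_of_nonneg (by positivity),
      Real.rpow_neg hv.le, show ((2:ℝ)) = ((2:ℕ):ℝ) by norm_num, Real.rpow_natCast]
    have : (‖v‖ ^ 3)⁻¹ * ‖v‖ = (‖v‖ ^ 2)⁻¹ := by
      field_simp
    exact le_of_eq this

lemma st9_meas_shell (c : E3) (r t : ℝ) :
    MeasurableSet {y : E3 | r < ‖y - c‖ ∧ ‖y - c‖ ≤ t} := by
  have hm : Measurable fun y : E3 => ‖y - c‖ :=
    (continuous_id.sub continuous_const).norm.measurable
  exact (measurableSet_lt measurable_const hm).inter (measurableSet_le hm measurable_const)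

lemma st9_shell_bound (c : E3) (f : E3 → ℝ≥0∞) (r t : ℝ) (ht : 0 ≤ t) (C0 : ℝ≥0∞)
    (hf : ∀ y : E3, r < ‖y - c‖ → ‖y - c‖ ≤ t → f y ≤ C0) :
    ∫⁻ y in {y : E3 | r < ‖y - c‖ ∧ ‖y - c‖ ≤ t}, f y
      ≤ C0 * (ENNReal.ofReal (t ^ 3) * volume (ball (0:E3) 1)) := by
  calc ∫⁻ y in {y : E3 | r < ‖y - c‖ ∧ ‖y - c‖ ≤ t}, f y
      ≤ ∫⁻ _ in {y : E3 | r < ‖y - c‖ ∧ ‖y - c‖ ≤ t}, C0 :=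
        setLIntegral_mono' (st9_meas_shell c r t) fun y hy => hf y hy.1 hy.2
  _ = C0 * volume {y : E3 | r < ‖y - c‖ ∧ ‖y - c‖ ≤ t} := setLIntegral_const _ _
  _ ≤ C0 * (ENNReal.ofReal (t ^ 3) * volume (ball (0:E3) 1)) := by
      apply mul_le_mul_right
      calc volume {y : E3 | r < ‖y - c‖ ∧ ‖y - c‖ ≤ t}
          ≤ volume (closedBall c t) := by
            apply measure_mono
            intro y hy
            rw [mem_closedBall, dist_eq_norm]
            exact hy.2
      _ = ENNReal.ofReal (t ^ 3) * volume (ball (0:E3) 1) := by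
          rw [Measure.addHaar_closedBall _ _ ht, finrank_euclideanSpace_fin]

lemma st9_tsum_geo (c q : ℝ) (hc : 0 ≤ c) (hq0 : 0 ≤ q) (hq : q ≤ 3/4) :
    ∑' k : ℕ, ENNReal.ofReal (c * q ^ k) ≤ ENNReal.ofReal (4 * c) := by
  have h1 : ∀ k : ℕ, ENNReal.ofReal (c * q ^ k) = ENNReal.ofReal c * ENNReal.ofReal q ^ k :=
    fun k => by rw [ENNReal.ofReal_mul hc, ENNReal.ofReal_pow hq0]
  simp_rw [h1]
  rw [ENNReal.tsum_mul_left, ENNReal.tsum_geometric]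
  have h2 : ENNReal.ofReal (1/4) ≤ 1 - ENNReal.ofReal q := by
    have hq' : ENNReal.ofReal q ≤ ENNReal.ofReal (3/4) := ENNReal.ofReal_le_ofReal hq
    calc ENNReal.ofReal (1/4) = 1 - ENNReal.ofReal (3/4) := by
          rw [← ENNReal.ofReal_one, ← ENNReal.ofReal_sub _ (by norm_num)]; norm_num
    _ ≤ 1 - ENNReal.ofReal q := tsub_le_tsub_left hq' 1
  have h3 : (1 - ENNReal.ofReal q)⁻¹ ≤ (ENNReal.ofReal (1/4))⁻¹ :=
    ENNReal.inv_le_inv' h2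
  have h4 : (ENNReal.ofReal (1/4))⁻¹ = 4 := by
    rw [show (1/4:ℝ) = (4:ℝ)⁻¹ by norm_num, ENNReal.ofReal_inv_of_pos (by norm_num), inv_inv]
    norm_num
  calc ENNReal.ofReal c * (1 - ENNReal.ofReal q)⁻¹
      ≤ ENNReal.ofReal c * 4 := by rw [← h4]; exact mul_le_mul_right h3 _
  _ = ENNReal.ofReal (4 * c) := by
      rw [ENNReal.ofReal_mul (by norm_num : (0:ℝ) ≤ 4)]
      rw [mul_comm]
      norm_num

lemma st9_norm_form (t : ℝ) (ht : 0 < t) (a b c : ℝ) :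
    (t * (2:ℝ) ^ b) ^ (-a) * (t * (2:ℝ) ^ c) ^ (3:ℕ)
      = t ^ (3 - a) * (2:ℝ) ^ (3 * c - b * a) := by
  have h2 : (0:ℝ) < 2 := two_pos
  rw [Real.mul_rpow ht.le (Real.rpow_nonneg h2.le _),
    ← Real.rpow_natCast (t * 2 ^ c) 3,
    Real.mul_rpow ht.le (Real.rpow_nonneg h2.le _),
    ← Real.rpow_mul h2.le, ← Real.rpow_mul h2.le]
  rw [mul_mul_mul_comm, ← Real.rpow_add ht, ← Real.rpow_add h2]
  norm_num
  ring_nf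

lemma st9_two_rpow_neg (k : ℕ) : (2:ℝ) ^ (-(k:ℝ)) = (1/2:ℝ) ^ k := by
  rw [Real.rpow_neg (by norm_num : (0:ℝ) ≤ 2), Real.rpow_natCast, one_div, inv_pow]

lemma st9_h24 : (2:ℝ) ^ (2:ℝ) = 4 := by
  have h := Real.rpow_natCast (2:ℝ) 2
  push_cast at h
  rw [h]; norm_num

lemma st9_h26 : (2:ℝ) ^ (6:ℝ) = 64 := by
  have h := Real.rpow_natCast (2:ℝ) 6
  push_cast at h
  rw [h]; norm_num

/-- Inner dyadic bound. -/
lemma st9_inner (c : E3) (a t : ℝ) (ha0 : 0 < a) (ha : a ≤ 2) (ht : 0 < t) :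
    ∫⁻ y in {y : E3 | ‖y - c‖ ≤ t}, ENNReal.ofReal (‖y - c‖ ^ (-a))
      ≤ ENNReal.ofReal (16 * t ^ (3 - a)) * volume (ball (0:E3) 1) := by
  set V := volume (ball (0:E3) 1)
  set S : ℕ → Set E3 := fun k =>
    {y : E3 | t * (2:ℝ) ^ (-(k:ℝ) - 1) < ‖y - c‖ ∧ ‖y - c‖ ≤ t * (2:ℝ) ^ (-(k:ℝ))} with hS
  have hcover : {y : E3 | ‖y - c‖ ≤ t} ⊆ {c} ∪ ⋃ k, S k := by
    intro y hy
    rcases eq_or_ne y c with h | h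
    · exact Or.inl (by simp [h])
    right
    have hpos : 0 < ‖y - c‖ := by
      rw [norm_pos_iff, sub_ne_zero]; exact h
    have hex : ∃ n : ℕ, t * (2:ℝ) ^ (-(n:ℝ) - 1) < ‖y - c‖ := by
      obtain ⟨n, hn⟩ := exists_pow_lt_of_lt_one (div_pos hpos ht) (by norm_num : (1:ℝ)/2 < 1)
      refine ⟨n, ?_⟩
      have h1 : t * (1/2:ℝ) ^ n < ‖y - c‖ := by
        rw [mul_comm, ← lt_div_iff₀ ht]; exact hn
      have h2 : (2:ℝ) ^ (-(n:ℝ) - 1) < (1/2:ℝ) ^ n := by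
        rw [← st9_two_rpow_neg]
        exact Real.rpow_lt_rpow_of_exponent_lt (by norm_num) (by linarith)
      nlinarith
    refine Set.mem_iUnion.2 ⟨Nat.find hex, Nat.find_spec hex, ?_⟩
    rcases Nat.eq_zero_or_pos (Nat.find hex) with h0 | hpos'
    · rw [h0]
      simp only [Nat.cast_zero, neg_zero, Real.rpow_zero, mul_one]
      exact hy
    · obtain ⟨m, hm⟩ : ∃ m, Nat.find hex = m + 1 :=
        ⟨Nat.find hex - 1, (Nat.succ_pred_eq_of_pos hpos').symm⟩
      have hmin := Nat.find_min hex (m := m) (by omega)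
      push_neg at hmin
      have hc : (-(((m + 1 : ℕ)):ℝ)) = -((m:ℕ):ℝ) - 1 := by push_cast; ring
      rw [hm, hc]
      exact hmin
  have hsing : volume ({c} : Set E3) = 0 := measure_singleton c
  calc ∫⁻ y in {y : E3 | ‖y - c‖ ≤ t}, ENNReal.ofReal (‖y - c‖ ^ (-a))
      ≤ ∫⁻ y in {c} ∪ ⋃ k, S k, ENNReal.ofReal (‖y - c‖ ^ (-a)) := lintegral_mono_set hcover
  _ ≤ (∫⁻ y in ({c} : Set E3), ENNReal.ofReal (‖y - c‖ ^ (-a)))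
        + ∫⁻ y in ⋃ k, S k, ENNReal.ofReal (‖y - c‖ ^ (-a)) := lintegral_union_le _ _ _
  _ ≤ 0 + ∑' k, ∫⁻ y in S k, ENNReal.ofReal (‖y - c‖ ^ (-a)) := by
      apply add_le_add
      · rw [setLIntegral_measure_zero _ _ hsing]
      · exact lintegral_iUnion_le _ _
  _ ≤ ∑' k, ENNReal.ofReal (4 * t ^ (3 - a) * (1/2:ℝ) ^ k) * V := by
      rw [zero_add]
      apply ENNReal.tsum_le_tsum
      intro k
      have hrk : (0:ℝ) < t * (2:ℝ) ^ (-(k:ℝ) - 1) := by positivity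
      have hb := st9_shell_bound c _ (t * (2:ℝ) ^ (-(k:ℝ) - 1)) (t * (2:ℝ) ^ (-(k:ℝ)))
        (by positivity) (ENNReal.ofReal ((t * (2:ℝ) ^ (-(k:ℝ) - 1)) ^ (-a)))
        (fun y h1 h2 => ENNReal.ofReal_le_ofReal
          (Real.rpow_le_rpow_of_nonpos hrk h1.le (by linarith)))
      refine hb.trans ?_
      rw [← mul_assoc, ← ENNReal.ofReal_mul (Real.rpow_nonneg (by positivity) _)]
      apply mul_le_mul_left
      apply ENNReal.ofReal_le_ofReal
      have hnf := st9_norm_form t ht a (-(k:ℝ) - 1) (-(k:ℝ))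
      rw [hnf]
      have hexp : (2:ℝ) ^ (3 * (-(k:ℝ)) - (-(k:ℝ) - 1) * a) ≤ (2:ℝ) ^ ((2:ℝ) - k) := by
        apply Real.rpow_le_rpow_of_exponent_le one_le_two
        have hk : (0:ℝ) ≤ (k:ℝ) := Nat.cast_nonneg k
        nlinarith
      have h2k : (2:ℝ) ^ ((2:ℝ) - (k:ℝ)) = 4 * (1/2:ℝ) ^ k := by
        rw [Real.rpow_sub two_pos, st9_h24, ← st9_two_rpow_neg,
          Real.rpow_neg (by norm_num : (0:ℝ) ≤ 2)]
        rw [div_eq_mul_inv]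
      calc t ^ (3 - a) * (2:ℝ) ^ (3 * (-(k:ℝ)) - (-(k:ℝ) - 1) * a)
          ≤ t ^ (3 - a) * ((2:ℝ) ^ ((2:ℝ) - k)) := by
            apply mul_le_mul_of_nonneg_left hexp (Real.rpow_nonneg ht.le _)
      _ = 4 * t ^ (3 - a) * (1/2:ℝ) ^ k := by rw [h2k]; ring
  _ = (∑' k, ENNReal.ofReal (4 * t ^ (3 - a) * (1/2:ℝ) ^ k)) * V := ENNReal.tsum_mul_right
  _ ≤ ENNReal.ofReal (4 * (4 * t ^ (3 - a))) * V := by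
      apply mul_le_mul_left
      exact st9_tsum_geo _ _ (by positivity) (by norm_num) (by norm_num)
  _ = ENNReal.ofReal (16 * t ^ (3 - a)) * V := by ring_nf

/-- Outer dyadic bound. -/
lemma st9_outer (a t : ℝ) (ha : 7/2 ≤ a) (ht : 0 < t) :
    ∫⁻ y in {y : E3 | t < ‖y‖}, ENNReal.ofReal (‖y‖ ^ (-a))
      ≤ ENNReal.ofReal (256 * t ^ (3 - a)) * volume (ball (0:E3) 1) := by
  set V := volume (ball (0:E3) 1)
  set S : ℕ → Set E3 := fun k =>
    {y : E3 | t * (2:ℝ) ^ (2*(k:ℝ)) < ‖y - 0‖ ∧ ‖y - 0‖ ≤ t * (2:ℝ) ^ (2*(k:ℝ) + 2)} with hS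
  have hcover : {y : E3 | t < ‖y‖} ⊆ ⋃ k, S k := by
    intro y hy
    have hy' : t < ‖y‖ := hy
    have hex : ∃ n : ℕ, ‖y‖ ≤ t * (2:ℝ) ^ (2*(n:ℝ) + 2) := by
      obtain ⟨n, hn⟩ := pow_unbounded_of_one_lt (‖y‖ / t) (by norm_num : (1:ℝ) < 4)
      refine ⟨n, ?_⟩
      have h4 : ((4:ℝ)) ^ n ≤ (2:ℝ) ^ (2*(n:ℝ) + 2) := by
        have : ((4:ℝ)) ^ n = (2:ℝ) ^ ((2*n : ℕ):ℝ) := by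
          rw [Real.rpow_natCast, pow_mul]; norm_num
        rw [this]
        apply Real.rpow_le_rpow_of_exponent_le one_le_two
        push_cast; linarith
      have : ‖y‖ / t < (4:ℝ) ^ n := hn
      rw [div_lt_iff₀ ht] at this
      nlinarith [Real.rpow_nonneg (by norm_num : (0:ℝ) ≤ 2) (2*(n:ℝ) + 2)]
    refine Set.mem_iUnion.2 ⟨Nat.find hex, ?_, ?_⟩
    · rw [sub_zero]
      rcases Nat.eq_zero_or_pos (Nat.find hex) with h0 | hpos'
      · rw [h0]
        simp only [Nat.cast_zero, mul_zero, Real.rpow_zero, mul_one]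
        exact hy'
      · obtain ⟨m, hm⟩ : ∃ m, Nat.find hex = m + 1 :=
          ⟨Nat.find hex - 1, (Nat.succ_pred_eq_of_pos hpos').symm⟩
        have hmin := Nat.find_min hex (m := m) (by omega)
        push_neg at hmin
        have hc : 2*(((m + 1 : ℕ)):ℝ) = 2*((m:ℕ):ℝ) + 2 := by push_cast; ring
        rw [hm, hc]
        exact hmin
    · rw [sub_zero]
      exact Nat.find_spec hex
  calc ∫⁻ y in {y : E3 | t < ‖y‖}, ENNReal.ofReal (‖y‖ ^ (-a))
      ≤ ∫⁻ y in ⋃ k, S k, ENNReal.ofReal (‖y‖ ^ (-a)) := lintegral_mono_set hcover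
  _ ≤ ∑' k, ∫⁻ y in S k, ENNReal.ofReal (‖y‖ ^ (-a)) := lintegral_iUnion_le _ _
  _ ≤ ∑' k, ENNReal.ofReal (64 * t ^ (3 - a) * (1/2:ℝ) ^ k) * V := by
      apply ENNReal.tsum_le_tsum
      intro k
      have hrk : (0:ℝ) < t * (2:ℝ) ^ (2*(k:ℝ)) := by positivity
      have hb := st9_shell_bound 0 (fun y => ENNReal.ofReal (‖y‖ ^ (-a)))
        (t * (2:ℝ) ^ (2*(k:ℝ))) (t * (2:ℝ) ^ (2*(k:ℝ) + 2))
        (by positivity) (ENNReal.ofReal ((t * (2:ℝ) ^ (2*(k:ℝ))) ^ (-a)))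
        (fun y h1 h2 => by
          rw [sub_zero] at h1
          exact ENNReal.ofReal_le_ofReal
            (Real.rpow_le_rpow_of_nonpos hrk h1.le (by linarith)))
      have heq : ∫⁻ y in S k, ENNReal.ofReal (‖y‖ ^ (-a))
          = ∫⁻ y in {y : E3 | t * (2:ℝ) ^ (2*(k:ℝ)) < ‖y - 0‖ ∧ ‖y - 0‖ ≤ t * (2:ℝ) ^ (2*(k:ℝ) + 2)},
              (fun y : E3 => ENNReal.ofReal (‖y‖ ^ (-a))) y := rfl
      rw [heq]
      refine hb.trans ?_
      rw [← mul_assoc, ← ENNReal.ofReal_mul (Real.rpow_nonneg (by positivity) _)]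
      apply mul_le_mul_left
      apply ENNReal.ofReal_le_ofReal
      have hnf := st9_norm_form t ht a (2*(k:ℝ)) (2*(k:ℝ) + 2)
      rw [hnf]
      have hexp : (2:ℝ) ^ (3 * (2*(k:ℝ) + 2) - (2*(k:ℝ)) * a) ≤ (2:ℝ) ^ ((6:ℝ) - k) := by
        apply Real.rpow_le_rpow_of_exponent_le one_le_two
        have hk : (0:ℝ) ≤ (k:ℝ) := Nat.cast_nonneg k
        nlinarith
      have h2k : (2:ℝ) ^ ((6:ℝ) - (k:ℝ)) = 64 * (1/2:ℝ) ^ k := by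
        rw [Real.rpow_sub two_pos, st9_h26, ← st9_two_rpow_neg,
          Real.rpow_neg (by norm_num : (0:ℝ) ≤ 2)]
        rw [div_eq_mul_inv]
      calc t ^ (3 - a) * (2:ℝ) ^ (3 * (2*(k:ℝ) + 2) - (2*(k:ℝ)) * a)
          ≤ t ^ (3 - a) * ((2:ℝ) ^ ((6:ℝ) - k)) := by
            apply mul_le_mul_of_nonneg_left hexp (Real.rpow_nonneg ht.le _)
      _ = 64 * t ^ (3 - a) * (1/2:ℝ) ^ k := by rw [h2k]; ring
  _ = (∑' k, ENNReal.ofReal (64 * t ^ (3 - a) * (1/2:ℝ) ^ k)) * V := ENNReal.tsum_mul_right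
  _ ≤ ENNReal.ofReal (4 * (64 * t ^ (3 - a))) * V := by
      apply mul_le_mul_left
      exact st9_tsum_geo _ _ (by positivity) (by norm_num) (by norm_num)
  _ = ENNReal.ofReal (256 * t ^ (3 - a)) * V := by ring_nf

lemma st9_halfpow (u b : ℝ) (hu : 0 ≤ u) :
    (u/2) ^ (-(2:ℝ)) = 4 * u ^ (-(2:ℝ)) := by
  rw [div_eq_mul_inv, Real.mul_rpow hu (by norm_num), Real.inv_rpow (by norm_num : (0:ℝ) ≤ 2),
    ← Real.rpow_neg (by norm_num : (0:ℝ) ≤ 2), neg_neg, st9_h24]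
  ring

lemma st9_two_rpow_le (e : ℝ) (he : e ≤ 2) : (2:ℝ) ^ e ≤ 4 := by
  calc (2:ℝ) ^ e ≤ (2:ℝ) ^ (2:ℝ) := Real.rpow_le_rpow_of_exponent_le one_le_two he
  _ = 4 := st9_h24


lemma st9_two_mul_rpow (u e : ℝ) (hu : 0 ≤ u) (he : e ≤ 2) :
    (2 * u) ^ e ≤ 4 * u ^ e := by
  rw [Real.mul_rpow (by norm_num) hu]
  exact mul_le_mul_of_nonneg_right (st9_two_rpow_le e he) (Real.rpow_nonneg hu e)


end Statement9Helpers

open Metric in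
/-- Decay of the Coulomb gauge for `3/2 < μ ≤ 2` (Proposition PC.3). -/
theorem statement9 (B : E3 → E3) (C μ R₀ : ℝ) (hμ : 3/2 < μ) (hμ2 : μ ≤ 2)
    (hBmd : IsMediumDecay B)
    (hbd : ∀ x : E3, R₀ ≤ ‖x‖ → ‖B x‖ ≤ C * ‖x‖ ^ (-μ)) :
    ∃ C' : ℝ, ∃ R₁ : ℝ, ∀ x : E3, R₁ ≤ ‖x‖ →
      ‖coulombGauge B x‖ ≤ C' * ‖x‖ ^ (-(μ - 1)) := by
  
  obtain ⟨p, hp3, hBp⟩ := hBmd.1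
  set V := volume (ball (0:E3) 1) with hV
  have hVfin : V ≠ ⊤ := measure_ball_lt_top.ne
  set Vr := V.toReal with hVr
  have hVr0 : 0 ≤ Vr := ENNReal.toReal_nonneg
  have hVeq : V = ENNReal.ofReal Vr := (ENNReal.ofReal_toReal hVfin).symm
  set C₁ := max C 1 with hC₁
  have hC₁0 : (0:ℝ) < C₁ := lt_of_lt_of_le one_pos (le_max_right _ _)
  set R := max R₀ 1 with hRdef
  have hR1 : (1:ℝ) ≤ R := le_max_right _ _
  have hBbd : ∀ y : E3, R ≤ ‖y‖ → ‖B y‖ ≤ C₁ * ‖y‖ ^ (-μ) := fun y hy =>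
    (hbd y (le_trans (le_max_left _ _) hy)).trans
      (mul_le_mul_of_nonneg_right (le_max_left C 1) (Real.rpow_nonneg (norm_nonneg y) _))
  -- L¹ bound on the ball of radius R
  have hfin : ∫⁻ y in closedBall (0:E3) R, ENNReal.ofReal ‖B y‖ < ⊤ := by
    haveI : IsFiniteMeasure (volume.restrict (closedBall (0:E3) R)) :=
      ⟨by rw [Measure.restrict_apply_univ]; exact measure_closedBall_lt_top⟩
    have hint : Integrable B (volume.restrict (closedBall (0:E3) R)) :=
      (hBp.restrict _).integrable (ENNReal.one_le_ofReal.mpr (by linarith))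
    have h2 := hint.2
    rw [hasFiniteIntegral_iff_norm] at h2
    exact h2
  set K := (∫⁻ y in closedBall (0:E3) R, ENNReal.ofReal ‖B y‖).toReal with hK
  have hK0 : 0 ≤ K := ENNReal.toReal_nonneg
  have hKeq : (∫⁻ y in closedBall (0:E3) R, ENNReal.ofReal ‖B y‖) = ENNReal.ofReal K :=
    (ENNReal.ofReal_toReal hfin.ne).symm
  refine ⟨(4*Real.pi)⁻¹ * (4 * (1312 * C₁ * Vr + 4 * K)), 2*R, ?_⟩
  intro x hx
  set s := ‖x‖ with hs
  have hs2R : 2*R ≤ s := hx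
  have hs1 : (1:ℝ) ≤ s := by linarith
  have hs0 : (0:ℝ) < s := by linarith
  have hs20 : (0:ℝ) < s/2 := by linarith
  have hRs2 : R ≤ s/2 := by linarith
  set F : E3 → E3 := fun y => cross3 ((‖x - y‖ ^ 3)⁻¹ • (x - y)) (B y) with hF
  set g : E3 → ℝ≥0∞ := fun y => ENNReal.ofReal (‖y - x‖ ^ (-(2:ℝ)) * ‖B y‖) with hg
  -- pointwise bound
  have hpt : ∀ y : E3, ENNReal.ofReal ‖F y‖ ≤ 4 * g y := by
    intro y
    have h1 : ‖F y‖ ≤ 4 * (‖y - x‖ ^ (-(2:ℝ)) * ‖B y‖) := by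
      calc ‖F y‖ ≤ 4 * (‖(‖x - y‖ ^ 3)⁻¹ • (x - y)‖ * ‖B y‖) := st9_cross_le _ _
      _ ≤ 4 * (‖x - y‖ ^ (-(2:ℝ)) * ‖B y‖) := by
          have := st9_kernel_le (x - y)
          gcongr
      _ = 4 * (‖y - x‖ ^ (-(2:ℝ)) * ‖B y‖) := by rw [norm_sub_rev]
    calc ENNReal.ofReal ‖F y‖ ≤ ENNReal.ofReal (4 * (‖y - x‖ ^ (-(2:ℝ)) * ‖B y‖)) :=
          ENNReal.ofReal_le_ofReal h1
    _ = 4 * g y := by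
        rw [ENNReal.ofReal_mul (by norm_num : (0:ℝ) ≤ 4)]
        congr 1
        norm_num
  -- regions
  set T1 : Set E3 := {y | ‖y - x‖ ≤ s/2} with hT1
  set T2 : Set E3 := {y | s/2 < ‖y - x‖ ∧ ‖y‖ ≤ R} with hT2
  set T3 : Set E3 := {y | s/2 < ‖y - x‖ ∧ R < ‖y‖ ∧ ‖y‖ ≤ 2*s} with hT3
  set T4 : Set E3 := {y | 2*s < ‖y‖} with hT4
  have hmx : Measurable fun y : E3 => ‖y - x‖ :=
    (continuous_id.sub continuous_const).norm.measurable
  have hmn : Measurable fun y : E3 => ‖y‖ := continuous_norm.measurable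
  have mT1 : MeasurableSet T1 := measurableSet_le hmx measurable_const
  have mT2 : MeasurableSet T2 :=
    (measurableSet_lt measurable_const hmx).inter (measurableSet_le hmn measurable_const)
  have mT3 : MeasurableSet T3 :=
    (measurableSet_lt measurable_const hmx).inter
      ((measurableSet_lt measurable_const hmn).inter (measurableSet_le hmn measurable_const))
  have hcover : (Set.univ : Set E3) ⊆ ((T1 ∪ T2) ∪ T3) ∪ T4 := by
    intro y _
    by_cases h1 : ‖y - x‖ ≤ s/2
    · exact Or.inl (Or.inl (Or.inl h1))
    push_neg at h1
    by_cases h4 : 2*s < ‖y‖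
    · exact Or.inr h4
    push_neg at h4
    by_cases h2 : ‖y‖ ≤ R
    · exact Or.inl (Or.inl (Or.inr ⟨h1, h2⟩))
    push_neg at h2
    exact Or.inl (Or.inr ⟨h1, h2, h4⟩)
  -- T1 bound
  have hb1 : ∫⁻ y in T1, g y ≤ ENNReal.ofReal (32 * C₁ * s^(1-μ)) * V := by
    have hptw : ∀ y ∈ T1, g y
        ≤ ENNReal.ofReal (C₁ * (s/2) ^ (-μ)) * ENNReal.ofReal (‖y - x‖ ^ (-(2:ℝ))) := by
      intro y hy
      have hy' : ‖y - x‖ ≤ s/2 := hy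
      have hyn : s/2 ≤ ‖y‖ := by
        have h := norm_sub_norm_le x y
        rw [norm_sub_rev x y] at h
        simp only [← hs] at h
        linarith
      have hB1 : ‖B y‖ ≤ C₁ * (s/2) ^ (-μ) := by
        calc ‖B y‖ ≤ C₁ * ‖y‖ ^ (-μ) := hBbd y (le_trans hRs2 hyn)
        _ ≤ C₁ * (s/2) ^ (-μ) := by
            apply mul_le_mul_of_nonneg_left _ hC₁0.le
            exact Real.rpow_le_rpow_of_nonpos hs20 hyn (by linarith)
      calc g y ≤ ENNReal.ofReal (‖y - x‖ ^ (-(2:ℝ)) * (C₁ * (s/2) ^ (-μ))) := by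
            apply ENNReal.ofReal_le_ofReal
            exact mul_le_mul_of_nonneg_left hB1 (Real.rpow_nonneg (norm_nonneg _) _)
      _ = ENNReal.ofReal (C₁ * (s/2) ^ (-μ)) * ENNReal.ofReal (‖y - x‖ ^ (-(2:ℝ))) := by
          rw [mul_comm, ENNReal.ofReal_mul (by positivity)]
    calc ∫⁻ y in T1, g y
        ≤ ∫⁻ y in T1, ENNReal.ofReal (C₁ * (s/2) ^ (-μ))
            * ENNReal.ofReal (‖y - x‖ ^ (-(2:ℝ))) := setLIntegral_mono' mT1 hptw
    _ = ENNReal.ofReal (C₁ * (s/2) ^ (-μ))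
          * ∫⁻ y in T1, ENNReal.ofReal (‖y - x‖ ^ (-(2:ℝ))) :=
        lintegral_const_mul' _ _ ENNReal.ofReal_ne_top
    _ ≤ ENNReal.ofReal (C₁ * (s/2) ^ (-μ))
          * (ENNReal.ofReal (16 * (s/2) ^ ((3:ℝ) - 2)) * V) := by
        apply mul_le_mul_right
        exact st9_inner x 2 (s/2) two_pos le_rfl hs20
    _ = ENNReal.ofReal (C₁ * (s/2) ^ (-μ) * (16 * (s/2) ^ ((3:ℝ) - 2))) * V := by
        rw [← mul_assoc, ← ENNReal.ofReal_mul (by positivity)]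
    _ ≤ ENNReal.ofReal (32 * C₁ * s^(1-μ)) * V := by
        apply mul_le_mul_left
        apply ENNReal.ofReal_le_ofReal
        have e32 : ((3:ℝ) - 2) = 1 := by norm_num
        rw [e32, Real.rpow_one]
        have ekey : (s/2) ^ (-μ) * (s/2) = (s/2) ^ (1-μ) := by
          nth_rewrite 2 [← Real.rpow_one (s/2)]
          rw [← Real.rpow_add hs20]
          ring_nf
        have ehalf : (s/2) ^ (1-μ) ≤ 2 * s ^ (1-μ) := by
          have h1 : (s/2) ^ (1-μ) = s ^ (1-μ) * (2:ℝ) ^ (μ-1) := by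
            rw [div_eq_mul_inv, Real.mul_rpow hs0.le (by norm_num),
              Real.inv_rpow (by norm_num : (0:ℝ) ≤ 2), ← Real.rpow_neg (by norm_num : (0:ℝ) ≤ 2)]
            ring_nf
          rw [h1]
          have h2 : (2:ℝ) ^ (μ-1) ≤ 2 := by
            calc (2:ℝ) ^ (μ-1) ≤ (2:ℝ) ^ (1:ℝ) :=
                  Real.rpow_le_rpow_of_exponent_le one_le_two (by linarith)
            _ = 2 := Real.rpow_one 2
          calc s ^ (1-μ) * (2:ℝ) ^ (μ-1) ≤ s ^ (1-μ) * 2 :=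
                mul_le_mul_of_nonneg_left h2 (Real.rpow_nonneg hs0.le _)
          _ = 2 * s ^ (1-μ) := by ring
        calc C₁ * (s/2) ^ (-μ) * (16 * (s/2)) = 16 * C₁ * ((s/2) ^ (-μ) * (s/2)) := by ring
        _ = 16 * C₁ * (s/2) ^ (1-μ) := by rw [ekey]
        _ ≤ 16 * C₁ * (2 * s ^ (1-μ)) := by
            apply mul_le_mul_of_nonneg_left ehalf (by positivity)
        _ = 32 * C₁ * s ^ (1-μ) := by ring
  -- kernel bound off the ball
  have hker : ∀ y : E3, s/2 < ‖y - x‖ → ‖y - x‖ ^ (-(2:ℝ)) ≤ 4 * s ^ (-(2:ℝ)) := by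
    intro y hy
    calc ‖y - x‖ ^ (-(2:ℝ)) ≤ (s/2) ^ (-(2:ℝ)) :=
          Real.rpow_le_rpow_of_nonpos hs20 hy.le (by norm_num)
    _ = 4 * s ^ (-(2:ℝ)) := st9_halfpow s 0 hs0.le
  -- T2 bound
  have hb2 : ∫⁻ y in T2, g y ≤ ENNReal.ofReal (4 * K * s^(1-μ)) := by
    have hptw : ∀ y ∈ T2, g y
        ≤ ENNReal.ofReal (4 * s ^ (-(2:ℝ))) * ENNReal.ofReal ‖B y‖ := by
      intro y hy
      calc g y ≤ ENNReal.ofReal ((4 * s ^ (-(2:ℝ))) * ‖B y‖) := by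
            apply ENNReal.ofReal_le_ofReal
            exact mul_le_mul_of_nonneg_right (hker y hy.1) (norm_nonneg _)
      _ = ENNReal.ofReal (4 * s ^ (-(2:ℝ))) * ENNReal.ofReal ‖B y‖ :=
          ENNReal.ofReal_mul (by positivity)
    calc ∫⁻ y in T2, g y
        ≤ ∫⁻ y in T2, ENNReal.ofReal (4 * s ^ (-(2:ℝ))) * ENNReal.ofReal ‖B y‖ :=
          setLIntegral_mono' mT2 hptw
    _ = ENNReal.ofReal (4 * s ^ (-(2:ℝ))) * ∫⁻ y in T2, ENNReal.ofReal ‖B y‖ :=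
        lintegral_const_mul' _ _ ENNReal.ofReal_ne_top
    _ ≤ ENNReal.ofReal (4 * s ^ (-(2:ℝ))) * ∫⁻ y in closedBall (0:E3) R, ENNReal.ofReal ‖B y‖ := by
        apply mul_le_mul_right
        apply lintegral_mono_set
        intro y hy
        rw [mem_closedBall, dist_zero_right]
        exact hy.2
    _ = ENNReal.ofReal (4 * s ^ (-(2:ℝ))) * ENNReal.ofReal K := by rw [hKeq]
    _ = ENNReal.ofReal (4 * s ^ (-(2:ℝ)) * K) := (ENNReal.ofReal_mul (by positivity)).symm
    _ ≤ ENNReal.ofReal (4 * K * s^(1-μ)) := by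
        apply ENNReal.ofReal_le_ofReal
        have h1 : s ^ (-(2:ℝ)) ≤ s ^ (1-μ) :=
          Real.rpow_le_rpow_of_exponent_le hs1 (by linarith)
        calc 4 * s ^ (-(2:ℝ)) * K ≤ 4 * s ^ (1-μ) * K := by
              apply mul_le_mul_of_nonneg_right _ hK0
              apply mul_le_mul_of_nonneg_left h1 (by norm_num)
        _ = 4 * K * s^(1-μ) := by ring
  -- T3 bound
  have hb3 : ∫⁻ y in T3, g y ≤ ENNReal.ofReal (256 * C₁ * s^(1-μ)) * V := by
    have hptw : ∀ y ∈ T3, g y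
        ≤ ENNReal.ofReal (4 * C₁ * s ^ (-(2:ℝ))) * ENNReal.ofReal (‖y‖ ^ (-μ)) := by
      intro y hy
      obtain ⟨hy1, hy2, _⟩ := hy
      have hB1 : ‖B y‖ ≤ C₁ * ‖y‖ ^ (-μ) := hBbd y hy2.le
      calc g y ≤ ENNReal.ofReal ((4 * s ^ (-(2:ℝ))) * (C₁ * ‖y‖ ^ (-μ))) := by
            apply ENNReal.ofReal_le_ofReal
            apply mul_le_mul (hker y hy1) hB1 (norm_nonneg _) (by positivity)
      _ = ENNReal.ofReal (4 * C₁ * s ^ (-(2:ℝ))) * ENNReal.ofReal (‖y‖ ^ (-μ)) := by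
          rw [← ENNReal.ofReal_mul (by positivity)]
          ring_nf
    calc ∫⁻ y in T3, g y
        ≤ ∫⁻ y in T3, ENNReal.ofReal (4 * C₁ * s ^ (-(2:ℝ))) * ENNReal.ofReal (‖y‖ ^ (-μ)) :=
          setLIntegral_mono' mT3 hptw
    _ = ENNReal.ofReal (4 * C₁ * s ^ (-(2:ℝ))) * ∫⁻ y in T3, ENNReal.ofReal (‖y‖ ^ (-μ)) :=
        lintegral_const_mul' _ _ ENNReal.ofReal_ne_top
    _ ≤ ENNReal.ofReal (4 * C₁ * s ^ (-(2:ℝ)))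
          * (ENNReal.ofReal (16 * (2*s) ^ ((3:ℝ) - μ)) * V) := by
        apply mul_le_mul_right
        have hsub : T3 ⊆ {y : E3 | ‖y - 0‖ ≤ 2*s} := by
          intro y hy
          rw [Set.mem_setOf_eq, sub_zero]
          exact hy.2.2
        calc ∫⁻ y in T3, ENNReal.ofReal (‖y‖ ^ (-μ))
            = ∫⁻ y in T3, ENNReal.ofReal (‖y - 0‖ ^ (-μ)) := by
              apply lintegral_congr
              intro y
              rw [sub_zero]
        _ ≤ ∫⁻ y in {y : E3 | ‖y - 0‖ ≤ 2*s}, ENNReal.ofReal (‖y - 0‖ ^ (-μ)) :=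
            lintegral_mono_set hsub
        _ ≤ ENNReal.ofReal (16 * (2*s) ^ ((3:ℝ) - μ)) * V :=
            st9_inner 0 μ (2*s) (by linarith) hμ2 (by linarith)
    _ = ENNReal.ofReal (4 * C₁ * s ^ (-(2:ℝ)) * (16 * (2*s) ^ ((3:ℝ) - μ))) * V := by
        rw [← mul_assoc, ← ENNReal.ofReal_mul (by positivity)]
    _ ≤ ENNReal.ofReal (256 * C₁ * s^(1-μ)) * V := by
        apply mul_le_mul_left
        apply ENNReal.ofReal_le_ofReal
        have h2s : (2*s) ^ ((3:ℝ) - μ) ≤ 4 * s ^ ((3:ℝ) - μ) :=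
          st9_two_mul_rpow s ((3:ℝ) - μ) hs0.le (by linarith)
        have hcomb : s ^ (-(2:ℝ)) * s ^ ((3:ℝ) - μ) = s ^ (1-μ) := by
          rw [← Real.rpow_add hs0]
          ring_nf
        calc 4 * C₁ * s ^ (-(2:ℝ)) * (16 * (2*s) ^ ((3:ℝ) - μ))
            ≤ 4 * C₁ * s ^ (-(2:ℝ)) * (16 * (4 * s ^ ((3:ℝ) - μ))) := by
              apply mul_le_mul_of_nonneg_left _ (by positivity)
              apply mul_le_mul_of_nonneg_left h2s (by norm_num)
        _ = 256 * C₁ * (s ^ (-(2:ℝ)) * s ^ ((3:ℝ) - μ)) := by ring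
        _ = 256 * C₁ * s ^ (1-μ) := by rw [hcomb]
  -- T4 bound
  have hb4 : ∫⁻ y in T4, g y ≤ ENNReal.ofReal (1024 * C₁ * s^(1-μ)) * V := by
    have hptw : ∀ y ∈ T4, g y
        ≤ ENNReal.ofReal (4 * C₁) * ENNReal.ofReal (‖y‖ ^ (-(2+μ))) := by
      intro y hy
      have hy' : 2*s < ‖y‖ := hy
      have hy0 : (0:ℝ) < ‖y‖ := by linarith
      have hxy : ‖y‖/2 ≤ ‖y - x‖ := by
        have h := norm_sub_norm_le y x
        simp only [← hs] at h
        linarith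
      have hker4 : ‖y - x‖ ^ (-(2:ℝ)) ≤ 4 * ‖y‖ ^ (-(2:ℝ)) := by
        calc ‖y - x‖ ^ (-(2:ℝ)) ≤ (‖y‖/2) ^ (-(2:ℝ)) :=
              Real.rpow_le_rpow_of_nonpos (by linarith) hxy (by norm_num)
        _ = 4 * ‖y‖ ^ (-(2:ℝ)) := st9_halfpow ‖y‖ 0 hy0.le
      have hB1 : ‖B y‖ ≤ C₁ * ‖y‖ ^ (-μ) := by
        apply hBbd
        linarith
      have hcomb : ‖y‖ ^ (-(2:ℝ)) * ‖y‖ ^ (-μ) = ‖y‖ ^ (-(2+μ)) := by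
        rw [← Real.rpow_add hy0]
        ring_nf
      calc g y ≤ ENNReal.ofReal ((4 * ‖y‖ ^ (-(2:ℝ))) * (C₁ * ‖y‖ ^ (-μ))) := by
            apply ENNReal.ofReal_le_ofReal
            apply mul_le_mul hker4 hB1 (norm_nonneg _) (by positivity)
      _ = ENNReal.ofReal (4 * C₁) * ENNReal.ofReal (‖y‖ ^ (-(2+μ))) := by
          rw [← ENNReal.ofReal_mul (by positivity)]
          rw [show (4 * ‖y‖ ^ (-(2:ℝ))) * (C₁ * ‖y‖ ^ (-μ))
              = 4 * C₁ * (‖y‖ ^ (-(2:ℝ)) * ‖y‖ ^ (-μ)) by ring, hcomb]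
    calc ∫⁻ y in T4, g y
        ≤ ∫⁻ y in T4, ENNReal.ofReal (4 * C₁) * ENNReal.ofReal (‖y‖ ^ (-(2+μ))) :=
          setLIntegral_mono' (measurableSet_lt measurable_const hmn) hptw
    _ = ENNReal.ofReal (4 * C₁) * ∫⁻ y in T4, ENNReal.ofReal (‖y‖ ^ (-(2+μ))) :=
        lintegral_const_mul' _ _ ENNReal.ofReal_ne_top
    _ ≤ ENNReal.ofReal (4 * C₁) * (ENNReal.ofReal (256 * (2*s) ^ ((3:ℝ) - (2+μ))) * V) := by
        apply mul_le_mul_right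
        exact st9_outer (2+μ) (2*s) (by linarith) (by linarith)
    _ = ENNReal.ofReal (4 * C₁ * (256 * (2*s) ^ ((3:ℝ) - (2+μ)))) * V := by
        rw [← mul_assoc, ← ENNReal.ofReal_mul (by positivity)]
    _ ≤ ENNReal.ofReal (1024 * C₁ * s^(1-μ)) * V := by
        apply mul_le_mul_left
        apply ENNReal.ofReal_le_ofReal
        have hexp : ((3:ℝ) - (2+μ)) = 1 - μ := by ring
        rw [hexp]
        have h2s : (2*s) ^ (1-μ) ≤ s ^ (1-μ) := by
          rw [Real.mul_rpow (by norm_num) hs0.le]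
          have h1 : (2:ℝ) ^ (1-μ) ≤ 1 := by
            calc (2:ℝ) ^ (1-μ) ≤ (2:ℝ) ^ (0:ℝ) :=
                  Real.rpow_le_rpow_of_exponent_le one_le_two (by linarith)
            _ = 1 := Real.rpow_zero 2
          nlinarith [Real.rpow_nonneg hs0.le (1-μ)]
        nlinarith [Real.rpow_nonneg hs0.le (1-μ), hC₁0.le]
  -- assemble
  have htotal : ∫⁻ y, ENNReal.ofReal ‖F y‖
      ≤ ENNReal.ofReal (4 * (1312 * C₁ * Vr + 4 * K) * s^(1-μ)) := by
    have hg : ∫⁻ y, g y ≤ ENNReal.ofReal ((1312 * C₁ * Vr + 4 * K) * s^(1-μ)) := by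
      have hsplit : ∫⁻ y, g y
          ≤ (∫⁻ y in T1, g y) + (∫⁻ y in T2, g y) + (∫⁻ y in T3, g y) + ∫⁻ y in T4, g y := by
        calc ∫⁻ y, g y = ∫⁻ y in Set.univ, g y := (setLIntegral_univ g).symm
        _ ≤ ∫⁻ y in ((T1 ∪ T2) ∪ T3) ∪ T4, g y := lintegral_mono_set hcover
        _ ≤ (∫⁻ y in (T1 ∪ T2) ∪ T3, g y) + ∫⁻ y in T4, g y := lintegral_union_le _ _ _
        _ ≤ ((∫⁻ y in T1 ∪ T2, g y) + ∫⁻ y in T3, g y) + ∫⁻ y in T4, g y := by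
            apply add_le_add_left (lintegral_union_le _ _ _)
        _ ≤ (∫⁻ y in T1, g y) + (∫⁻ y in T2, g y) + (∫⁻ y in T3, g y) + ∫⁻ y in T4, g y := by
            apply add_le_add_left
            apply add_le_add_left
            exact lintegral_union_le _ _ _
      have hsum : (∫⁻ y in T1, g y) + (∫⁻ y in T2, g y) + (∫⁻ y in T3, g y) + ∫⁻ y in T4, g y
          ≤ ENNReal.ofReal ((1312 * C₁ * Vr + 4 * K) * s^(1-μ)) := by
        have hVmul : ∀ a : ℝ, 0 ≤ a → ENNReal.ofReal a * V = ENNReal.ofReal (a * Vr) :=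
          fun a ha => by rw [hVeq, ← ENNReal.ofReal_mul ha]
        calc (∫⁻ y in T1, g y) + (∫⁻ y in T2, g y) + (∫⁻ y in T3, g y) + ∫⁻ y in T4, g y
            ≤ (ENNReal.ofReal (32 * C₁ * s^(1-μ)) * V + ENNReal.ofReal (4 * K * s^(1-μ))
                + ENNReal.ofReal (256 * C₁ * s^(1-μ)) * V)
                + ENNReal.ofReal (1024 * C₁ * s^(1-μ)) * V := by
              exact add_le_add (add_le_add (add_le_add hb1 hb2) hb3) hb4
        _ = ENNReal.ofReal (32 * C₁ * s^(1-μ) * Vr) + ENNReal.ofReal (4 * K * s^(1-μ))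
              + ENNReal.ofReal (256 * C₁ * s^(1-μ) * Vr)
              + ENNReal.ofReal (1024 * C₁ * s^(1-μ) * Vr) := by
            rw [hVmul _ (by positivity), hVmul _ (by positivity), hVmul _ (by positivity)]
        _ = ENNReal.ofReal (32 * C₁ * s^(1-μ) * Vr + 4 * K * s^(1-μ)
              + 256 * C₁ * s^(1-μ) * Vr + 1024 * C₁ * s^(1-μ) * Vr) := by
            rw [← ENNReal.ofReal_add (by positivity) (by positivity),
              ← ENNReal.ofReal_add (by positivity) (by positivity),
              ← ENNReal.ofReal_add (by positivity) (by positivity)]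
        _ = ENNReal.ofReal ((1312 * C₁ * Vr + 4 * K) * s^(1-μ)) := by
            congr 1
            ring
      exact hsplit.trans hsum
    calc ∫⁻ y, ENNReal.ofReal ‖F y‖ ≤ ∫⁻ y, 4 * g y := lintegral_mono hpt
    _ = 4 * ∫⁻ y, g y := lintegral_const_mul' _ _ (by norm_num)
    _ ≤ 4 * ENNReal.ofReal ((1312 * C₁ * Vr + 4 * K) * s^(1-μ)) := mul_le_mul_right hg _
    _ = ENNReal.ofReal (4 * ((1312 * C₁ * Vr + 4 * K) * s^(1-μ))) := by
        rw [ENNReal.ofReal_mul (by norm_num : (0:ℝ) ≤ 4)]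
        norm_num
    _ = ENNReal.ofReal (4 * (1312 * C₁ * Vr + 4 * K) * s^(1-μ)) := by ring_nf
  -- conclude
  have hpi : (0:ℝ) < 4 * Real.pi := by positivity
  have hnorm : ‖coulombGauge B x‖ = (4*Real.pi)⁻¹ * ‖∫ y, F y‖ := by
    rw [coulombGauge, norm_smul, Real.norm_eq_abs, abs_neg, abs_of_nonneg (by positivity)]
  have hD0 : (0:ℝ) ≤ 4 * (1312 * C₁ * Vr + 4 * K) * s^(1-μ) := by positivity
  have hIF : ‖∫ y, F y‖ ≤ 4 * (1312 * C₁ * Vr + 4 * K) * s^(1-μ) := by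
    calc ‖∫ y, F y‖ ≤ (∫⁻ y, ENNReal.ofReal ‖F y‖).toReal := norm_integral_le_lintegral_norm F
    _ ≤ 4 * (1312 * C₁ * Vr + 4 * K) * s^(1-μ) := ENNReal.toReal_le_of_le_ofReal hD0 htotal
  rw [hnorm, show -(μ - 1) = 1 - μ by ring]
  calc (4*Real.pi)⁻¹ * ‖∫ y, F y‖
      ≤ (4*Real.pi)⁻¹ * (4 * (1312 * C₁ * Vr + 4 * K) * s^(1-μ)) := by
        apply mul_le_mul_of_nonneg_left hIF (by positivity)
  _ = (4*Real.pi)⁻¹ * (4 * (1312 * C₁ * Vr + 4 * K)) * s^(1-μ) := by ring
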